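/- With L as above, the function L is lower semicontinuous (closed) on ℝ^d. -/

import Mathlib

open MeasureTheory
open scoped RealInnerProductSpace ENNReal

set_option maxHeartbeats 2000000 in
open Filter Topology Set in
theorem stmt_12 (d : ℕ)
    (b : EuclideanSpace ℝ (Fin d))
    (c : EuclideanSpace ℝ (Fin d) →L[ℝ] EuclideanSpace ℝ (Fin d))
    (hcsym : ∀ x y, ⟪c x, y⟫ = ⟪x, c y⟫) (hcpos : ∀ x, 0 ≤ ⟪x, c x⟫)
    (F : Measure (EuclideanSpace ℝ (Fin d))) [SigmaFinite F]
    (hF0 : F {0} = 0)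
    (hF1 : ∫⁻ x, ENNReal.ofReal (min (‖x‖ ^ 2) 1) ∂F < ⊤)
    (hF2 : ∫⁻ x in {x | 1 < ‖x‖}, ENNReal.ofReal ‖x‖ ∂F < ⊤)
    (g : EuclideanSpace ℝ (Fin d) → EuclideanSpace ℝ (Fin d) → ℝ)
    (hg : ∀ lam x, g lam x =
      (if ‖x‖ ≤ 1 then ⟪lam, x⟫ else 0) - Real.log (1 + ⟪lam, x⟫))
    (L : EuclideanSpace ℝ (Fin d) → EReal)
    (hL : ∀ lam, L lam =
      if F {x | 1 + ⟪lam, x⟫ ≤ 0} = 0 then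
        ((-⟪lam, b⟫ + (1/2) * ⟪lam, c lam⟫ : ℝ) : EReal)
          + ((∫⁻ x, ENNReal.ofReal (g lam x) ∂F : ℝ≥0∞) : EReal)
          - ((∫⁻ x, ENNReal.ofReal (-(g lam x)) ∂F : ℝ≥0∞) : EReal)
      else (⊤ : EReal)) :
    LowerSemicontinuous L := by
  classical
  intro lam₀ y hy
  rw [Filter.eventually_iff_seq_eventually]
  intro u hu
  -- basic continuity facts
  have hcont_inner : ∀ x : EuclideanSpace ℝ (Fin d),
      Continuous (fun lam : EuclideanSpace ℝ (Fin d) => ⟪lam, x⟫) :=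
    fun x => continuous_id.inner continuous_const
  set R : ℝ := ‖lam₀‖ + 1 with hRdef
  have hR0 : 0 < R := by positivity
  have hR1 : 1 ≤ R := by have := norm_nonneg lam₀; simp only [hRdef]; linarith
  have hRlam : ‖lam₀‖ ≤ R := by simp only [hRdef]; linarith
  -- replace u by a sequence staying in the ball of radius R
  set w : ℕ → EuclideanSpace ℝ (Fin d) := fun n => if ‖u n‖ ≤ R then u n else lam₀ with hwdef
  have hwR : ∀ n, ‖w n‖ ≤ R := by
    intro n; simp only [hwdef]; split_ifs with h; exacts [h, hRlam]
  have hweq : ∀ᶠ n in atTop, w n = u n := by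
    have h1 : Tendsto (fun n => ‖u n‖) atTop (𝓝 ‖lam₀‖) := hu.norm
    have h2 : ∀ᶠ n in atTop, ‖u n‖ ≤ R :=
      (h1.eventually_lt_const (show ‖lam₀‖ < R by simp only [hRdef]; linarith)).mono
        fun n hn => hn.le
    filter_upwards [h2] with n hn
    simp only [hwdef, if_pos hn]
  have hw : Tendsto w atTop (𝓝 lam₀) := hu.congr' (hweq.mono fun n h => h.symm)
  suffices hs : ∀ᶠ n in atTop, y < L (w n) by
    filter_upwards [hs, hweq] with n h1 h2
    rwa [h2] at h1
  -- the three pieces of L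
  set C : EuclideanSpace ℝ (Fin d) → ℝ :=
    fun lam => -⟪lam, b⟫ + (1/2) * ⟪lam, c lam⟫ with hCdef
  have hCcont : Continuous C := by
    apply Continuous.add
    · exact (continuous_id.inner continuous_const).neg
    · exact continuous_const.mul (continuous_id.inner c.continuous)
  set Mf : EuclideanSpace ℝ (Fin d) → EuclideanSpace ℝ (Fin d) → ℝ≥0∞ :=
    fun lam x => if 1 + ⟪lam, x⟫ ≤ 0 then ⊤ else ENNReal.ofReal (g lam x) with hMfdef
  set M : EuclideanSpace ℝ (Fin d) → ℝ≥0∞ := fun lam => ∫⁻ x, Mf lam x ∂F with hMdef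
  set Nf : EuclideanSpace ℝ (Fin d) → EuclideanSpace ℝ (Fin d) → ℝ≥0∞ :=
    fun lam x => ENNReal.ofReal (-(g lam x)) with hNfdef
  set N : EuclideanSpace ℝ (Fin d) → ℝ≥0∞ := fun lam => ∫⁻ x, Nf lam x ∂F with hNdef
  -- measurability
  have hmeasg : ∀ lam, Measurable (g lam) := by
    intro lam
    have hfe : g lam = fun x =>
        (if ‖x‖ ≤ 1 then ⟪lam, x⟫ else 0) - Real.log (1 + ⟪lam, x⟫) := funext (hg lam)
    rw [hfe]
    apply Measurable.sub
    · exact Measurable.ite (measurableSet_le measurable_norm measurable_const)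
        (continuous_const.inner continuous_id).measurable measurable_const
    · exact Real.measurable_log.comp
        (continuous_const.add (continuous_const.inner continuous_id)).measurable
  have hmeasMf : ∀ lam, Measurable (Mf lam) := by
    intro lam
    apply Measurable.ite _ measurable_const (ENNReal.measurable_ofReal.comp (hmeasg lam))
    exact measurableSet_le (continuous_const.add (continuous_const.inner continuous_id)).measurable
      measurable_const
  have hmeasNf : ∀ lam, Measurable (Nf lam) :=
    fun lam => ENNReal.measurable_ofReal.comp (hmeasg lam).neg
  -- dominating function
  set S1 : Set (EuclideanSpace ℝ (Fin d)) := {x | R⁻¹ ≤ ‖x‖ ∧ ‖x‖ ≤ 1} with hS1def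
  set S2 : Set (EuclideanSpace ℝ (Fin d)) := {x | 1 < ‖x‖} with hS2def
  have hS1m : MeasurableSet S1 := by
    have : S1 = {x : EuclideanSpace ℝ (Fin d) | R⁻¹ ≤ ‖x‖} ∩ {x | ‖x‖ ≤ 1} := rfl
    rw [this]
    exact (measurableSet_le measurable_const measurable_norm).inter
      (measurableSet_le measurable_norm measurable_const)
  have hS2m : MeasurableSet S2 := measurableSet_lt measurable_const measurable_norm
  set D : EuclideanSpace ℝ (Fin d) → ℝ≥0∞ := fun x =>
    S1.indicator (fun _ => ENNReal.ofReal (2*R)) x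
      + S2.indicator (fun x => ENNReal.ofReal (2*R*‖x‖)) x with hDdef
  have hS1fin : F S1 < ⊤ := by
    have key : ENNReal.ofReal (min (R⁻¹ ^ 2) 1) * F S1
        ≤ ∫⁻ x, ENNReal.ofReal (min (‖x‖ ^ 2) 1) ∂F := by
      rw [← setLIntegral_const S1 (ENNReal.ofReal (min (R⁻¹ ^ 2) 1))]
      calc ∫⁻ _ in S1, ENNReal.ofReal (min (R⁻¹ ^ 2) 1) ∂F
          ≤ ∫⁻ x in S1, ENNReal.ofReal (min (‖x‖ ^ 2) 1) ∂F := by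
            apply setLIntegral_mono' hS1m
            intro x hx
            apply ENNReal.ofReal_le_ofReal
            have h1 : R⁻¹ ≤ ‖x‖ := hx.1
            have h2 : R⁻¹ ^ 2 ≤ ‖x‖ ^ 2 := by
              apply pow_le_pow_left₀ (by positivity) h1
            exact min_le_min h2 le_rfl
        _ ≤ _ := setLIntegral_le_lintegral _ _
    by_contra hcon
    rw [not_lt, top_le_iff] at hcon
    rw [hcon, ENNReal.mul_top (by
      simp only [ne_eq, ENNReal.ofReal_eq_zero, not_le]
      exact lt_min (by positivity) one_pos)] at key
    exact absurd (top_le_iff.mp key) hF1.ne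
  have hDfin : ∫⁻ x, D x ∂F ≠ ⊤ := by
    have hm1 : Measurable (S1.indicator (fun _ => ENNReal.ofReal (2*R))) :=
      measurable_const.indicator hS1m
    simp only [hDdef]
    rw [lintegral_add_left hm1]
    have hv1 : ∫⁻ x, S1.indicator (fun _ => ENNReal.ofReal (2*R)) x ∂F
        = ENNReal.ofReal (2*R) * F S1 := by
      rw [lintegral_indicator hS1m, setLIntegral_const]
    have hv2 : ∫⁻ x, S2.indicator (fun x => ENNReal.ofReal (2*R*‖x‖)) x ∂F
        = ENNReal.ofReal (2*R) * ∫⁻ x in S2, ENNReal.ofReal ‖x‖ ∂F := by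
      rw [lintegral_indicator hS2m]
      have : ∀ x : EuclideanSpace ℝ (Fin d), ENNReal.ofReal (2*R*‖x‖)
          = ENNReal.ofReal (2*R) * ENNReal.ofReal ‖x‖ :=
        fun x => ENNReal.ofReal_mul (by positivity)
      simp_rw [this]
      rw [lintegral_const_mul _ measurable_norm.ennreal_ofReal]
    rw [hv1, hv2]
    exact ENNReal.add_ne_top.mpr
      ⟨ENNReal.mul_ne_top ENNReal.ofReal_ne_top hS1fin.ne,
       ENNReal.mul_ne_top ENNReal.ofReal_ne_top hF2.ne⟩
  have hdom : ∀ lam, ‖lam‖ ≤ R → ∀ x, Nf lam x ≤ D x := by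
    intro lam hlam x
    simp only [hNfdef, hDdef]
    rw [hg lam x]
    have ht : |⟪lam, x⟫| ≤ R * ‖x‖ :=
      le_trans (abs_real_inner_le_norm lam x)
        (mul_le_mul_of_nonneg_right hlam (norm_nonneg x))
    by_cases hx : ‖x‖ ≤ 1
    · rw [if_pos hx]
      by_cases hpos : 0 < 1 + ⟪lam, x⟫
      · have hlog : Real.log (1 + ⟪lam, x⟫) ≤ ⟪lam, x⟫ := by
          have := Real.log_le_sub_one_of_pos hpos; linarith
        have hnp : -(⟪lam, x⟫ - Real.log (1 + ⟪lam, x⟫)) ≤ 0 := by linarith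
        rw [ENNReal.ofReal_eq_zero.mpr hnp]
        exact bot_le
      · push_neg at hpos
        have hts : ⟪lam, x⟫ ≤ -1 := by linarith
        have hmt : -⟪lam, x⟫ ≤ R * ‖x‖ := le_trans (neg_le_abs _) ht
        have hx1 : R⁻¹ ≤ ‖x‖ := by
          rw [inv_eq_one_div, div_le_iff₀ hR0]
          nlinarith
        have hlog : Real.log (1 + ⟪lam, x⟫) ≤ -(1 + ⟪lam, x⟫) := by
          rw [← Real.log_neg_eq_log]
          exact Real.log_le_self (by linarith)
        have hb : -(⟪lam, x⟫ - Real.log (1 + ⟪lam, x⟫)) ≤ 2*R := by nlinarith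
        calc ENNReal.ofReal (-(⟪lam, x⟫ - Real.log (1 + ⟪lam, x⟫)))
            ≤ ENNReal.ofReal (2*R) := ENNReal.ofReal_le_ofReal hb
          _ = S1.indicator (fun _ => ENNReal.ofReal (2*R)) x :=
              (Set.indicator_of_mem (show x ∈ S1 from ⟨hx1, hx⟩) (fun _ => ENNReal.ofReal (2*R))).symm
          _ ≤ _ := le_self_add
    · push_neg at hx
      rw [if_neg (not_le.mpr hx)]
      have hb : -(0 - Real.log (1 + ⟪lam, x⟫)) ≤ 2*R*‖x‖ := by
        rw [zero_sub, neg_neg]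
        by_cases hpos : 0 < 1 + ⟪lam, x⟫
        · have h1 := Real.log_le_sub_one_of_pos hpos
          have h2 : ⟪lam, x⟫ ≤ |⟪lam, x⟫| := le_abs_self _
          nlinarith
        · push_neg at hpos
          have hlog : Real.log (1 + ⟪lam, x⟫) ≤ -(1 + ⟪lam, x⟫) := by
            rw [← Real.log_neg_eq_log]
            exact Real.log_le_self (by linarith)
          have h2 : -⟪lam, x⟫ ≤ |⟪lam, x⟫| := neg_le_abs _
          nlinarith
      calc ENNReal.ofReal (-(0 - Real.log (1 + ⟪lam, x⟫)))
          ≤ ENNReal.ofReal (2*R*‖x‖) := ENNReal.ofReal_le_ofReal hb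
        _ = S2.indicator (fun x => ENNReal.ofReal (2*R*‖x‖)) x :=
            (Set.indicator_of_mem (show x ∈ S2 from hx) (fun x => ENNReal.ofReal (2*R*‖x‖))).symm
        _ ≤ _ := le_add_self
  set B : ℝ≥0∞ := ∫⁻ x, D x ∂F with hBdef
  have hNle : ∀ lam, ‖lam‖ ≤ R → N lam ≤ B := fun lam h => lintegral_mono (hdom lam h)
  have hNfin : ∀ lam, ‖lam‖ ≤ R → N lam ≠ ⊤ :=
    fun lam h => ne_top_of_le_ne_top hDfin (hNle lam h)
  -- formula for L
  have hLeq : ∀ lam, N lam ≠ ⊤ →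
      L lam = (C lam : EReal) + (M lam : EReal) - (N lam : EReal) := by
    intro lam hN
    rw [hL lam]
    by_cases hbad : F {x | 1 + ⟪lam, x⟫ ≤ 0} = 0
    · rw [if_pos hbad]
      have hae : ∀ᵐ x ∂F, ¬ (1 + ⟪lam, x⟫ ≤ 0) := by
        rw [ae_iff]
        simpa using hbad
      have hM : M lam = ∫⁻ x, ENNReal.ofReal (g lam x) ∂F := by
        apply lintegral_congr_ae
        filter_upwards [hae] with x hx
        simp only [hMfdef, if_neg hx]
      rw [hM]
    · rw [if_neg hbad]
      have hSm : MeasurableSet {x : EuclideanSpace ℝ (Fin d) | 1 + ⟪lam, x⟫ ≤ 0} :=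
        measurableSet_le
          (continuous_const.add (continuous_const.inner continuous_id)).measurable
          measurable_const
      have hMtop : M lam = ⊤ := by
        refine top_unique ?_
        calc (⊤:ℝ≥0∞) = ⊤ * F {x | 1 + ⟪lam, x⟫ ≤ 0} := (ENNReal.top_mul hbad).symm
          _ = ∫⁻ _ in {x | 1 + ⟪lam, x⟫ ≤ 0}, ⊤ ∂F := (setLIntegral_const _ _).symm
          _ = ∫⁻ x in {x | 1 + ⟪lam, x⟫ ≤ 0}, Mf lam x ∂F := by
              refine setLIntegral_congr_fun hSm ?_
              intro x hx
              simp only [hMfdef]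
              rw [if_pos (show (1:ℝ) + ⟪lam, x⟫ ≤ 0 from hx)]
          _ ≤ M lam := setLIntegral_le_lintegral _ _
      rw [hMtop, EReal.coe_ennreal_top]
      rw [EReal.add_top_of_ne_bot (EReal.coe_ne_bot _)]
      rw [sub_eq_add_neg, EReal.top_add_of_ne_bot]
      rw [ne_eq, EReal.neg_eq_bot_iff, EReal.coe_ennreal_eq_top_iff]
      exact hN
  -- pointwise lower semicontinuity of Mf
  have hptM : ∀ x, Mf lam₀ x ≤ atTop.liminf (fun n => Mf (w n) x) := by
    intro x
    have ht : Tendsto (fun n => ⟪w n, x⟫) atTop (𝓝 ⟪lam₀, x⟫) :=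
      ((hcont_inner x).tendsto lam₀).comp hw
    have ht1 : Tendsto (fun n => 1 + ⟪w n, x⟫) atTop (𝓝 (1 + ⟪lam₀, x⟫)) :=
      tendsto_const_nhds.add ht
    by_cases h0 : 1 + ⟪lam₀, x⟫ ≤ 0
    · have htop : Tendsto (fun n => Mf (w n) x) atTop (𝓝 ⊤) := by
        rw [ENNReal.tendsto_nhds_top_iff_nat]
        intro K
        have hev : ∀ᶠ n in atTop, 1 + ⟪w n, x⟫ < Real.exp (-((K:ℝ) + 1 + R)) :=
          ht1.eventually_lt_const (lt_of_le_of_lt h0 (Real.exp_pos _))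
        filter_upwards [hev] with n hn
        by_cases hneg : 1 + ⟪w n, x⟫ ≤ 0
        · simp only [hMfdef]
          rw [if_pos hneg]
          exact ENNReal.natCast_lt_top K
        · push_neg at hneg
          have hlog : Real.log (1 + ⟪w n, x⟫) ≤ -((K:ℝ) + 1 + R) := by
            calc Real.log (1 + ⟪w n, x⟫) ≤ Real.log (Real.exp (-((K:ℝ) + 1 + R))) :=
                Real.log_le_log hneg hn.le
              _ = -((K:ℝ) + 1 + R) := Real.log_exp _
          have hind : -R ≤ (if ‖x‖ ≤ 1 then ⟪w n, x⟫ else 0) := by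
            split_ifs with hx1
            · have h2 : |⟪w n, x⟫| ≤ R * ‖x‖ :=
                le_trans (abs_real_inner_le_norm _ _)
                  (mul_le_mul_of_nonneg_right (hwR n) (norm_nonneg x))
              have h3 : R * ‖x‖ ≤ R := by nlinarith
              have h4 := neg_abs_le ⟪w n, x⟫
              linarith
            · linarith
          have hgK : (K:ℝ) + 1 ≤ g (w n) x := by
            rw [hg]
            linarith
          calc (K:ℝ≥0∞) = ENNReal.ofReal (K:ℝ) := (ENNReal.ofReal_natCast K).symm
            _ < ENNReal.ofReal ((K:ℝ) + 1) := by
                rw [ENNReal.ofReal_lt_ofReal_iff (by positivity)]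
                linarith
            _ ≤ ENNReal.ofReal (g (w n) x) := ENNReal.ofReal_le_ofReal hgK
            _ = Mf (w n) x := by
                simp only [hMfdef]
                rw [if_neg (not_le.mpr hneg)]
      rw [htop.liminf_eq]
      exact le_top
    · push_neg at h0
      have hev : ∀ᶠ n in atTop, Mf (w n) x = ENNReal.ofReal (g (w n) x) := by
        filter_upwards [ht1.eventually_const_lt h0] with n hn
        simp only [hMfdef]
        rw [if_neg (not_le.mpr hn)]
      have hgc : Tendsto (fun n => ENNReal.ofReal (g (w n) x)) atTop
          (𝓝 (ENNReal.ofReal (g lam₀ x))) := by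
        apply ENNReal.tendsto_ofReal
        have hfe : ∀ lam, g lam x =
            (if ‖x‖ ≤ 1 then ⟪lam, x⟫ else 0) - Real.log (1 + ⟪lam, x⟫) :=
          fun lam => hg lam x
        simp only [hfe]
        apply Tendsto.sub
        · split_ifs with hx1
          · exact ht
          · exact tendsto_const_nhds
        · exact ((Real.continuousAt_log (ne_of_gt h0)).tendsto).comp ht1
      have hMt : Tendsto (fun n => Mf (w n) x) atTop (𝓝 (ENNReal.ofReal (g lam₀ x))) :=
        hgc.congr' (hev.mono fun n h => h.symm)
      rw [hMt.liminf_eq]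
      simp only [hMfdef]
      rw [if_neg (not_le.mpr h0)]
  -- pointwise upper semicontinuity of Nf
  have hptN : ∀ x, atTop.limsup (fun n => Nf (w n) x) ≤ Nf lam₀ x := by
    intro x
    have ht : Tendsto (fun n => ⟪w n, x⟫) atTop (𝓝 ⟪lam₀, x⟫) :=
      ((hcont_inner x).tendsto lam₀).comp hw
    have ht1 : Tendsto (fun n => 1 + ⟪w n, x⟫) atTop (𝓝 (1 + ⟪lam₀, x⟫)) :=
      tendsto_const_nhds.add ht
    refine ENNReal.le_of_forall_pos_le_add ?_
    intro ε hε _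
    have hev : ∀ᶠ n in atTop, -(g (w n) x) ≤ -(g lam₀ x) + (ε:ℝ) := by
      by_cases h0 : 1 + ⟪lam₀, x⟫ = 0
      · have hind : Tendsto (fun n => (if ‖x‖ ≤ 1 then ⟪w n, x⟫ else 0)) atTop
            (𝓝 (if ‖x‖ ≤ 1 then ⟪lam₀, x⟫ else 0)) := by
          split_ifs with hx1
          · exact ht
          · exact tendsto_const_nhds
        have h1 : ∀ᶠ n in atTop, |1 + ⟪w n, x⟫| < 1 := by
          have habs : Tendsto (fun n => |1 + ⟪w n, x⟫|) atTop (𝓝 |1 + ⟪lam₀, x⟫|) :=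
            ht1.abs
          rw [h0, abs_zero] at habs
          exact habs.eventually_lt_const one_pos
        have h2 : ∀ᶠ n in atTop,
            (if ‖x‖ ≤ 1 then ⟪lam₀, x⟫ else 0) - (ε:ℝ)
              < (if ‖x‖ ≤ 1 then ⟪w n, x⟫ else 0) :=
          hind.eventually_const_lt (by have : (0:ℝ) < ε := hε; linarith)
        filter_upwards [h1, h2] with n hn1 hn2
        rw [hg, hg, h0, Real.log_zero]
        have hlogn : Real.log (1 + ⟪w n, x⟫) ≤ 0 := by
          rw [← Real.log_abs]
          exact Real.log_nonpos (abs_nonneg _) hn1.le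
        linarith
      · have hgc : Tendsto (fun n => -(g (w n) x)) atTop (𝓝 (-(g lam₀ x))) := by
          apply Tendsto.neg
          have hfe : ∀ lam, g lam x =
              (if ‖x‖ ≤ 1 then ⟪lam, x⟫ else 0) - Real.log (1 + ⟪lam, x⟫) :=
            fun lam => hg lam x
          simp only [hfe]
          apply Tendsto.sub
          · split_ifs with hx1
            · exact ht
            · exact tendsto_const_nhds
          · exact ((Real.continuousAt_log h0).tendsto).comp ht1
        have : (0:ℝ) < ε := hε
        exact (hgc.eventually_lt_const (by linarith)).mono fun n h => h.le
    have hev2 : ∀ᶠ n in atTop, Nf (w n) x ≤ Nf lam₀ x + (ε : ℝ≥0∞) := by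
      filter_upwards [hev] with n hn
      simp only [hNfdef]
      calc ENNReal.ofReal (-(g (w n) x)) ≤ ENNReal.ofReal (-(g lam₀ x) + (ε:ℝ)) :=
          ENNReal.ofReal_le_ofReal hn
        _ ≤ ENNReal.ofReal (-(g lam₀ x)) + ENNReal.ofReal (ε:ℝ) := ENNReal.ofReal_add_le
        _ = ENNReal.ofReal (-(g lam₀ x)) + (ε:ℝ≥0∞) := by rw [ENNReal.ofReal_coe_nnreal]
    exact Filter.limsup_le_of_le (by isBoundedDefault) hev2
  -- Fatou
  have hMliminf : M lam₀ ≤ atTop.liminf (fun n => M (w n)) := by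
    calc M lam₀ ≤ ∫⁻ x, atTop.liminf (fun n => Mf (w n) x) ∂F := lintegral_mono hptM
    _ ≤ atTop.liminf (fun n => M (w n)) := lintegral_liminf_le (fun n => hmeasMf (w n))
  have hNlimsup : atTop.limsup (fun n => N (w n)) ≤ N lam₀ := by
    calc atTop.limsup (fun n => N (w n))
        ≤ ∫⁻ x, atTop.limsup (fun n => Nf (w n) x) ∂F :=
          limsup_lintegral_le D (fun n => hmeasNf (w n))
            (fun n => Filter.Eventually.of_forall (hdom (w n) (hwR n))) hDfin
    _ ≤ N lam₀ := lintegral_mono hptN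
  -- conclusion
  have hco : ∀ z : ℝ≥0∞, z ≠ ⊤ → (z : EReal) = ((z.toReal : ℝ) : EReal) := by
    intro z hz
    lift z to NNReal using hz
    rw [EReal.coe_nnreal_eq_coe_real, ENNReal.coe_toReal]
  have hN0fin : N lam₀ ≠ ⊤ := hNfin lam₀ hRlam
  have hL0 : L lam₀ = (C lam₀ : EReal) + (M lam₀ : EReal) - (N lam₀ : EReal) :=
    hLeq lam₀ hN0fin
  rw [hL0] at hy
  have hLn : ∀ n, L (w n) = (C (w n) : EReal) + (M (w n) : EReal) - (N (w n) : EReal) :=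
    fun n => hLeq _ (hNfin _ (hwR n))
  have hCt : Tendsto (fun n => C (w n)) atTop (𝓝 (C lam₀)) := (hCcont.tendsto lam₀).comp hw
  induction y using EReal.rec with
  | bot =>
    apply Filter.Eventually.of_forall
    intro n
    rw [hLn n, bot_lt_iff_ne_bot, sub_eq_add_neg]
    intro hcon
    rcases EReal.add_eq_bot_iff.mp hcon with h | h
    · rcases EReal.add_eq_bot_iff.mp h with h' | h'
      · exact EReal.coe_ne_bot _ h'
      · exact EReal.coe_ennreal_ne_bot _ h'
    · rw [EReal.neg_eq_bot_iff, EReal.coe_ennreal_eq_top_iff] at h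
      exact hNfin _ (hwR n) h
  | top => exact absurd hy (not_top_lt)
  | coe yr =>
    by_cases hMtop : M lam₀ = ⊤
    · have e2 : ∀ᶠ n in atTop,
          ENNReal.ofReal (yr - (C lam₀ - 1) + B.toReal + 1) < M (w n) := by
        refine Filter.eventually_lt_of_lt_liminf ?_ (by isBoundedDefault)
        apply lt_of_lt_of_le _ hMliminf
        rw [hMtop]
        exact ENNReal.ofReal_lt_top
      have e1 : ∀ᶠ n in atTop, C lam₀ - 1 < C (w n) := hCt.eventually_const_lt (by linarith)
      filter_upwards [e1, e2] with n h1 h2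
      rw [hLn n]
      have step : ((C lam₀ - 1 : ℝ) : EReal)
            + (ENNReal.ofReal (yr - (C lam₀ - 1) + B.toReal + 1) : EReal) - (B : EReal)
          ≤ (C (w n) : EReal) + (M (w n) : EReal) - (N (w n) : EReal) := by
        apply EReal.sub_le_sub
        · exact add_le_add (EReal.coe_le_coe_iff.mpr h1.le)
            (EReal.coe_ennreal_le_coe_ennreal_iff.mpr h2.le)
        · exact EReal.coe_ennreal_le_coe_ennreal_iff.mpr (hNle _ (hwR n))
      refine lt_of_lt_of_le ?_ step
      have hBv : (B : EReal) = ((B.toReal : ℝ) : EReal) := hco _ hDfin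
      have harg : ((yr - (C lam₀ - 1) + B.toReal + 1 : ℝ) : EReal)
          ≤ (ENNReal.ofReal (yr - (C lam₀ - 1) + B.toReal + 1) : EReal) := by
        rw [EReal.coe_ennreal_ofReal]
        exact EReal.coe_le_coe_iff.mpr (le_max_left _ _)
      calc ((yr:ℝ) : EReal)
          < (((C lam₀ - 1) + (yr - (C lam₀ - 1) + B.toReal + 1) - B.toReal : ℝ) : EReal) := by
            rw [EReal.coe_lt_coe_iff]
            linarith
        _ = ((C lam₀ - 1 : ℝ) : EReal) + ((yr - (C lam₀ - 1) + B.toReal + 1 : ℝ) : EReal)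
              - ((B.toReal : ℝ) : EReal) := by
            rw [← EReal.coe_add, ← EReal.coe_sub]
        _ ≤ _ := by
            rw [hBv]
            exact EReal.sub_le_sub (add_le_add le_rfl harg) le_rfl
    · have hM0fin : M lam₀ ≠ ⊤ := hMtop
      have hMv : (M lam₀ : EReal) = (((M lam₀).toReal : ℝ) : EReal) := hco _ hM0fin
      have hNv : (N lam₀ : EReal) = (((N lam₀).toReal : ℝ) : EReal) := hco _ hN0fin
      have hyr : yr < C lam₀ + (M lam₀).toReal - (N lam₀).toReal := by
        rw [hMv, hNv, ← EReal.coe_add, ← EReal.coe_sub, gt_iff_lt, EReal.coe_lt_coe_iff] at hy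
        exact hy
      set m₀ : ℝ := (M lam₀).toReal with hm₀def
      set n₀ : ℝ := (N lam₀).toReal with hn₀def
      set ε : ℝ := (C lam₀ + m₀ - n₀ - yr)/4 with hεdef
      clear_value ε
      clear_value m₀ n₀
      have hnum : 0 < C lam₀ + m₀ - n₀ - yr := by linarith
      have hε0 : 0 < ε := by
        rw [hεdef]
        exact div_pos hnum (by norm_num)
      have hε4 : 4*ε = C lam₀ + m₀ - n₀ - yr := by
        rw [hεdef]
        ring
      have e1 : ∀ᶠ n in atTop, C lam₀ - ε < C (w n) := hCt.eventually_const_lt (by linarith)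
      have e2 : ∀ᶠ n in atTop, ENNReal.ofReal (m₀ - ε) ≤ M (w n) := by
        rcases le_or_gt (m₀ - ε) 0 with h | h
        · refine Filter.Eventually.of_forall fun n => ?_
          rw [ENNReal.ofReal_eq_zero.mpr h]
          exact bot_le
        · have hlt : ENNReal.ofReal (m₀ - ε) < M lam₀ := by
            conv_rhs => rw [← ENNReal.ofReal_toReal hM0fin]
            rw [ENNReal.ofReal_lt_ofReal_iff (by rw [← hm₀def]; linarith)]
            rw [← hm₀def]
            linarith
          exact (Filter.eventually_lt_of_lt_liminf
            (lt_of_lt_of_le hlt hMliminf) (by isBoundedDefault)).mono fun n hn => hn.le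
      have e3 : ∀ᶠ n in atTop, N (w n) < N lam₀ + ENNReal.ofReal ε := by
        refine Filter.eventually_lt_of_limsup_lt ?_ (by isBoundedDefault)
        apply lt_of_le_of_lt hNlimsup
        apply ENNReal.lt_add_right hN0fin
        simp only [ne_eq, ENNReal.ofReal_eq_zero, not_le]
        exact hε0
      filter_upwards [e1, e2, e3] with n h1 h2 h3
      rw [hLn n]
      have step : ((C lam₀ - ε : ℝ) : EReal) + (ENNReal.ofReal (m₀ - ε) : EReal)
            - ((N lam₀ + ENNReal.ofReal ε : ℝ≥0∞) : EReal)
          ≤ (C (w n) : EReal) + (M (w n) : EReal) - (N (w n) : EReal) := by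
        apply EReal.sub_le_sub
        · exact add_le_add (EReal.coe_le_coe_iff.mpr h1.le)
            (EReal.coe_ennreal_le_coe_ennreal_iff.mpr h2)
        · exact EReal.coe_ennreal_le_coe_ennreal_iff.mpr h3.le
      refine lt_of_lt_of_le ?_ step
      have hsum : N lam₀ + ENNReal.ofReal ε = ENNReal.ofReal (n₀ + ε) := by
        rw [ENNReal.ofReal_add (by rw [hn₀def]; exact ENNReal.toReal_nonneg) hε0.le]
        rw [hn₀def, ENNReal.ofReal_toReal hN0fin]
      have hNv2 : ((N lam₀ + ENNReal.ofReal ε : ℝ≥0∞) : EReal) = ((n₀ + ε : ℝ) : EReal) := by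
        rw [hsum, EReal.coe_ennreal_ofReal,
          max_eq_left (add_nonneg (by rw [hn₀def]; exact ENNReal.toReal_nonneg) hε0.le)]
      have harg : ((m₀ - ε : ℝ) : EReal) ≤ (ENNReal.ofReal (m₀ - ε) : EReal) := by
        rw [EReal.coe_ennreal_ofReal]
        exact EReal.coe_le_coe_iff.mpr (le_max_left _ _)
      calc ((yr:ℝ) : EReal) < (((C lam₀ - ε) + (m₀ - ε) - (n₀ + ε) : ℝ) : EReal) := by
            rw [EReal.coe_lt_coe_iff]
            linarith [hε4]
        _ = ((C lam₀ - ε : ℝ) : EReal) + ((m₀ - ε : ℝ) : EReal) - ((n₀ + ε : ℝ) : EReal) := by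
            rw [← EReal.coe_add, ← EReal.coe_sub]
        _ ≤ _ := by
            rw [hNv2]
            exact EReal.sub_le_sub (add_le_add le_rfl harg) le_rfl
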